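/- Let F_m denote the Fibonacci numbers (F_1 = F_2 = 1, F_{m+1} = F_m + F_{m−1}). Let m ≥ 1 and define integers a_1, …, a_{2m} by: a_1 = 2; a_{2i} = a_{2i+1} = (−1)^i·2 for 1 ≤ i ≤ m−1; and a_{2m} = (−1)^m·2. Then (∏_{i=1}^{2m} [[a_i,1],[1,0]])·(1,0)ᵀ = (−1)^m·(F_{3m+1}, F_{3m})ᵀ. Equivalently, the continued fraction [2, −2, −2, 2, 2, …, (−1)^{m−1}·2, (−1)^{m−1}·2, (−1)^m·2] of length 2m equals F_{3m+1}/F_{3m}. -/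

import Mathlib

open Matrix

lemma cf_aux (m : ℕ) (hm : 1 ≤ m) (a : ℕ → ℤ)
    (ha1 : a 1 = 2)
    (ha : ∀ i, 1 ≤ i → i ≤ m - 1 → a (2 * i) = (-1) ^ i * 2 ∧ a (2 * i + 1) = (-1) ^ i * 2)
    (ham : a (2 * m) = (-1) ^ m * 2) :
    (List.ofFn fun i : Fin (2 * m) =>
        (!![a ((i : ℕ) + 1), 1; 1, 0] : Matrix (Fin 2) (Fin 2) ℤ)).prod =
      !![(-1) ^ m * (Nat.fib (3 * m + 1) : ℤ), (Nat.fib (3 * m) : ℤ);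
         (-1) ^ m * (Nat.fib (3 * m) : ℤ), (Nat.fib (3 * m + 1) : ℤ) - (Nat.fib (3 * m) : ℤ)] := by
  induction m, hm using Nat.le_induction with
  | base =>
      have h2 : a 2 = -2 := by simpa using ham
      show (List.ofFn fun i : Fin 2 => (!![a ((i : ℕ) + 1), 1; 1, 0] : Matrix (Fin 2) (Fin 2) ℤ)).prod = _
      simp [List.ofFn_succ, ha1, h2, Matrix.mul_fin_two]
      norm_num [Nat.fib]
  | succ m hm ih =>
      have ham' : a (2 * m) = (-1) ^ m * 2 := (ha m hm (by omega)).1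
      have IH := ih (fun i h1 h2 => ha i h1 (by omega)) ham'
      have ha21 : a (2 * m + 1) = (-1) ^ m * 2 := (ha m hm (by omega)).2
      have ha22 : a (2 * m + 2) = (-1) ^ (m + 1) * 2 := by
        have := ham; rw [show 2 * (m + 1) = 2 * m + 2 from by ring] at this; exact this
      show (List.ofFn fun i : Fin (2 * m + 1 + 1) =>
        (!![a ((i : ℕ) + 1), 1; 1, 0] : Matrix (Fin 2) (Fin 2) ℤ)).prod = _
      rw [List.ofFn_succ', List.ofFn_succ']
      simp only [List.concat_eq_append, List.prod_append, List.prod_cons, List.prod_nil,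
        Fin.coe_castSucc, Fin.val_last, mul_one]
      rw [IH, ha21, ha22]
      have f2 : (Nat.fib (3 * m + 2) : ℤ) = Nat.fib (3 * m + 1) + Nat.fib (3 * m) := by
        push_cast [Nat.fib_add_two]; ring
      have f3 : (Nat.fib (3 * m + 3) : ℤ) = Nat.fib (3 * m + 2) + Nat.fib (3 * m + 1) := by
        push_cast [show 3 * m + 3 = (3 * m + 1) + 2 from by ring, Nat.fib_add_two]; ring
      have f4 : (Nat.fib (3 * m + 4) : ℤ) = Nat.fib (3 * m + 3) + Nat.fib (3 * m + 2) := by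
        push_cast [show 3 * m + 4 = (3 * m + 2) + 2 from by ring, Nat.fib_add_two]; ring
      have e : ((-1 : ℤ)) ^ m * (-1) ^ m = 1 := by
        rw [← pow_add]; simp [pow_add, pow_mul, ← two_mul]
      rw [show 3 * (m + 1) + 1 = 3 * m + 4 from by ring, show 3 * (m + 1) = 3 * m + 3 from by ring,
        f4, f3, f2]
      rw [Matrix.mul_fin_two, Matrix.mul_fin_two]
      rcases neg_one_pow_eq_or ℤ m with h | h <;>
        rw [pow_succ, h] <;> ext i j <;> fin_cases i <;> fin_cases j <;> simp <;> ring

/-- let `m ≥ 1` and let `a_1, …, a_{2m}` be given by `a_1 = 2`,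
`a_{2i} = a_{2i+1} = (-1)^i·2` for `1 ≤ i ≤ m-1`, and `a_{2m} = (-1)^m·2`.
Then `(∏_{i=1}^{2m} [[a_i,1],[1,0]])·(1,0)ᵀ = (-1)^m·(F_{3m+1}, F_{3m})ᵀ`;
i.e. the continued fraction `[2, -2, -2, 2, 2, …, (-1)^m·2]` of length `2m`
equals `F_{3m+1}/F_{3m}`. -/
theorem cf_fib_ratio_F3m1_F3m (m : ℕ) (hm : 1 ≤ m) (a : ℕ → ℤ)
    (ha1 : a 1 = 2)
    (ha : ∀ i, 1 ≤ i → i ≤ m - 1 → a (2 * i) = (-1) ^ i * 2 ∧ a (2 * i + 1) = (-1) ^ i * 2)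
    (ham : a (2 * m) = (-1) ^ m * 2) :
    (List.ofFn fun i : Fin (2 * m) =>
        (!![a ((i : ℕ) + 1), 1; 1, 0] : Matrix (Fin 2) (Fin 2) ℤ)).prod
      *ᵥ ![1, 0] =
      (-1) ^ m • ![(Nat.fib (3 * m + 1) : ℤ), (Nat.fib (3 * m) : ℤ)] := by
  rw [cf_aux m hm a ha1 ha ham]
  ext i
  fin_cases i <;> simp [Matrix.mulVec, dotProduct, Fin.sum_univ_two, mul_comm]
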